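/- Let T : ℝ₊₊^N → ℝ₊₊^N be an MSP mapping and let ‖·‖ be a monotone norm on ℝ^N. Then there exists exactly one pair (γ, x) ∈ ℝ₊₊ × ℝ₊₊^N such that T(x) = γx and ‖x‖ = 1. -/

import Mathlib

open MeasureTheory Filter

private lemma sup'_const_mul' {ι : Type*} (s : Finset ι) (hs : s.Nonempty) {a : ℝ} (ha : 0 ≤ a)
    (f : ι → ℝ) : s.sup' hs (fun i => a * f i) = a * s.sup' hs f := by
  rw [show (fun i => a * f i) = (fun z => a * z) ∘ f from rfl,
    ← Finset.comp_sup'_eq_sup'_comp hs (fun z => a * z)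
      (fun x y => by exact mul_max_of_nonneg x y ha)]

private lemma continuousOn_finset_sup' {ι X : Type*} [TopologicalSpace X] {K : Set X}
    (s : Finset ι) (f : ι → X → ℝ) (hf : ∀ i ∈ s, ContinuousOn (f i) K) :
    ∀ hs : s.Nonempty, ContinuousOn (fun x => s.sup' hs fun i => f i x) K := by
  induction s using Finset.cons_induction with
  | empty => exact fun hs => absurd hs (by simp)
  | cons a s ha ih =>
    intro hs
    rcases s.eq_empty_or_nonempty with rfl | hs'
    · simpa using hf a (by simp)
    · have heq : (fun x => (Finset.cons a s ha).sup' hs fun i => f i x)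
          = fun x => (f a x) ⊔ (s.sup' hs' fun i => f i x) := by
        funext x; rw [Finset.sup'_cons hs']
      rw [heq]
      exact (hf a (by simp)).sup (ih (fun i hi => hf i (by simp [hi])) hs')

/-- The open positive cone in `ℝ^N`. -/
def PosCone (N : ℕ) : Set (Fin N → ℝ) := {x | ∀ i, 0 < x i}

/-- A monotonic, scalable, and positive (MSP) function on the positive cone `ℝ₊₊^N`:
(0) it is positive on the cone, (i) monotone on the cone, (ii) scalable, and
(iii) its infimum over the cone is positive. -/
def IsMSPFun {N : ℕ} (f : (Fin N → ℝ) → ℝ) : Prop :=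
  (∀ x : Fin N → ℝ, (∀ i, 0 < x i) → 0 < f x) ∧
  (∀ x y : Fin N → ℝ, (∀ i, 0 < x i) → (∀ i, 0 < y i) → x ≤ y → f x ≤ f y) ∧
  (∀ α : ℝ, 1 < α → ∀ x : Fin N → ℝ, (∀ i, 0 < x i) → f (α • x) < α * f x) ∧
  0 < sInf (f '' PosCone N)

/-- An MSP mapping: every coordinate function is an MSP function. -/
def IsMSPMap {N : ℕ} (T : (Fin N → ℝ) → (Fin N → ℝ)) : Prop :=
  ∀ i, IsMSPFun (fun x => T x i)

/-- A monotone norm on `ℝ^N`: a genuine norm that is order-preserving on the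
nonnegative cone. -/
def IsMonoNorm {N : ℕ} (nrm : (Fin N → ℝ) → ℝ) : Prop :=
  (∀ x : Fin N → ℝ, nrm x = 0 ↔ x = 0) ∧
  (∀ (a : ℝ) (x : Fin N → ℝ), nrm (a • x) = |a| * nrm x) ∧
  (∀ x y : Fin N → ℝ, nrm (x + y) ≤ nrm x + nrm y) ∧
  (∀ x y : Fin N → ℝ, (∀ i, 0 ≤ x i) → (∀ i, 0 ≤ y i) → x ≤ y → nrm x ≤ nrm y)

/-- Proposition 1 (existence and uniqueness of the conditional eigenpair): for an MSP
mapping `T` and a monotone norm, there is exactly one pair `(γ, x) ∈ ℝ₊₊ × ℝ₊₊^N`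
with `T x = γ • x` and `‖x‖ = 1`. -/
theorem stmt2 {N : ℕ} (hN : 0 < N) (T : (Fin N → ℝ) → (Fin N → ℝ)) (hT : IsMSPMap T)
    (nrm : (Fin N → ℝ) → ℝ) (hnrm : IsMonoNorm nrm) :
    ∃! p : ℝ × (Fin N → ℝ),
      (0 < p.1 ∧ (∀ i, 0 < p.2 i)) ∧ T p.2 = p.1 • p.2 ∧ nrm p.2 = 1 := by
  classical
  have i0 : Fin N := ⟨0, hN⟩
  obtain ⟨hn0, hnsmul, hntri, hnmono⟩ := hnrm
  -- ==== norm basics ====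
  have nrm_zero : nrm 0 = 0 := (hn0 0).mpr rfl
  have nrm_neg : ∀ x, nrm (-x) = nrm x := by
    intro x
    have h := hnsmul (-1) x
    simpa using h
  have nrm_nonneg : ∀ x, 0 ≤ nrm x := by
    intro x
    have h := hntri x (-x)
    rw [add_neg_cancel, nrm_zero, nrm_neg] at h
    linarith
  have nrm_pos : ∀ x : Fin N → ℝ, x ≠ 0 → 0 < nrm x := fun x hx =>
    (nrm_nonneg x).lt_of_ne fun h => hx ((hn0 x).mp h.symm)
  have nrm_sub : ∀ x y, nrm x - nrm y ≤ nrm (x - y) := by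
    intro x y
    have h := hntri (x - y) y
    rw [sub_add_cancel] at h
    linarith
  have nrm_single : ∀ (i : Fin N) (t : ℝ), nrm (Pi.single i t) = |t| * nrm (Pi.single i 1) := by
    intro i t
    have : (Pi.single i t : Fin N → ℝ) = t • (Pi.single i 1 : Fin N → ℝ) := by
      funext k
      simp [Pi.single_apply]
    rw [this, hnsmul]
  have nrm_sum_le : ∀ (s : Finset (Fin N)) (g : Fin N → (Fin N → ℝ)),
      nrm (∑ i ∈ s, g i) ≤ ∑ i ∈ s, nrm (g i) := by
    intro s g
    induction s using Finset.cons_induction with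
    | empty => simp [nrm_zero]
    | cons a s ha ih =>
      rw [Finset.sum_cons, Finset.sum_cons]
      exact (hntri _ _).trans (by linarith)
  set C : ℝ := ∑ i : Fin N, nrm (Pi.single i 1) with hC
  have nrm_lipC : ∀ x y : Fin N → ℝ, |nrm x - nrm y| ≤ C * dist x y := by
    intro x y
    have hxy : nrm (x - y) ≤ C * dist x y := by
      have h1 : x - y = ∑ i : Fin N, Pi.single i ((x - y) i) := (Finset.univ_sum_single _).symm
      rw [h1]
      refine (nrm_sum_le _ _).trans ?_
      rw [hC, Finset.sum_mul]
      refine Finset.sum_le_sum fun i _ => ?_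
      rw [nrm_single]
      rw [mul_comm (nrm _) (dist x y)]
      apply mul_le_mul_of_nonneg_right _ (nrm_nonneg _)
      calc |(x - y) i| = dist (x i) (y i) := by rw [Real.dist_eq]; rfl
        _ ≤ dist x y := dist_le_pi_dist x y i
    rw [abs_sub_le_iff]
    constructor
    · exact (nrm_sub x y).trans hxy
    · refine (nrm_sub y x).trans ?_
      rw [← nrm_neg (y - x), neg_sub] at *
      exact hxy
  have nrm_cont : Continuous nrm := by
    have hC0 : 0 ≤ C := Finset.sum_nonneg fun i _ => nrm_nonneg _
    refine (LipschitzWith.of_dist_le_mul (K := ⟨C, hC0⟩) fun x y => ?_).continuous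
    rw [Real.dist_eq]
    exact nrm_lipC x y
  -- ==== T basics ====
  have Tpos : ∀ x : Fin N → ℝ, (∀ i, 0 < x i) → ∀ i, 0 < T x i := fun x hx i => (hT i).1 x hx
  have Tmono : ∀ x y : Fin N → ℝ, (∀ i, 0 < x i) → (∀ i, 0 < y i) → (∀ i, x i ≤ y i) →
      ∀ i, T x i ≤ T y i := fun x y hx hy hxy i => (hT i).2.1 x y hx hy hxy
  have Tscale : ∀ α : ℝ, 1 < α → ∀ x : Fin N → ℝ, (∀ i, 0 < x i) → ∀ i,
      T (α • x) i < α * T x i := fun α hα x hx i => (hT i).2.2.1 α hα x hx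
  have Tscale_le : ∀ α : ℝ, 1 ≤ α → ∀ x : Fin N → ℝ, (∀ i, 0 < x i) → ∀ i,
      T (α • x) i ≤ α * T x i := by
    intro α hα x hx i
    rcases eq_or_lt_of_le hα with h | h
    · rw [← h, one_smul, one_mul]
    · exact (Tscale α h x hx i).le
  have Tscale_ge : ∀ β : ℝ, 0 < β → β < 1 → ∀ x : Fin N → ℝ, (∀ i, 0 < x i) → ∀ i,
      β * T x i < T (β • x) i := by
    intro β hβ0 hβ1 x hx i
    have h1 : 1 < 1/β := by rw [lt_div_iff₀ hβ0]; linarith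
    have hbx : ∀ j, 0 < (β • x) j := fun j => mul_pos hβ0 (hx j)
    have h := Tscale (1/β) h1 (β • x) hbx i
    rw [smul_smul, one_div_mul_cancel hβ0.ne', one_smul] at h
    calc β * T x i < β * ((1/β) * T (β • x) i) := by
          apply mul_lt_mul_of_pos_left h hβ0
      _ = T (β • x) i := by field_simp
  have Tcont : ∀ x : Fin N → ℝ, (∀ i, 0 < x i) → ContinuousAt T x := by
    intro x hx
    apply continuousAt_pi'
    intro i
    rw [Metric.continuousAt_iff]
    intro ε hε
    have hfxpos : 0 < T x i := Tpos x hx i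
    set fx := T x i with hfx
    set α : ℝ := 1 + ε / (2 * fx) with hαdef'
    set m : ℝ := Finset.univ.inf' ⟨i0, Finset.mem_univ i0⟩ x with hm'
    clear_value m α fx
    have hα : 1 < α := by
      have : 0 < ε / (2 * fx) := div_pos hε (by linarith)
      rw [hαdef']; linarith
    have hα0 : 0 < α := by linarith
    have hαinv1 : 1/α < 1 := by rw [div_lt_one hα0]; exact hα
    have hαinv0 : 0 < 1/α := by positivity
    have hαε : (α - 1) * (2 * fx) = ε := by
      rw [hαdef']; field_simp; ring
    have hm : 0 < m := by
      rw [hm']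
      exact (Finset.lt_inf'_iff ..).mpr fun j _ => hx j
    have hmle : ∀ j, m ≤ x j := fun j => by rw [hm']; exact Finset.inf'_le x (Finset.mem_univ j)
    refine ⟨(1 - 1/α) * m, by nlinarith, ?_⟩
    intro y hy
    have hyx : ∀ j, |y j - x j| < (1 - 1/α) * m := by
      intro j
      calc |y j - x j| = dist (y j) (x j) := (Real.dist_eq _ _).symm
        _ ≤ dist y x := dist_le_pi_dist y x j
        _ < _ := hy
    have hylb : ∀ j, (1/α) * x j ≤ y j := by
      intro j
      have h1 := (abs_lt.mp (hyx j)).1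
      have h2 : (1 - 1/α) * m ≤ (1 - 1/α) * x j :=
        mul_le_mul_of_nonneg_left (hmle j) (by linarith)
      nlinarith
    have hyub : ∀ j, y j ≤ α * x j := by
      intro j
      have h1 := (abs_lt.mp (hyx j)).2
      have h2 : (1 - 1/α) * m ≤ (1 - 1/α) * x j :=
        mul_le_mul_of_nonneg_left (hmle j) (by linarith)
      have h3 : (1 - 1/α) * x j ≤ (α - 1) * x j := by
        apply mul_le_mul_of_nonneg_right _ (hx j).le
        have e1 : 1 - 1/α = (α - 1)/α := by field_simp
        rw [e1]
        exact div_le_self (by linarith) (by linarith)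
      linarith
    have hycone : ∀ j, 0 < y j := fun j => lt_of_lt_of_le (mul_pos hαinv0 (hx j)) (hylb j)
    have hαx : ∀ j, 0 < (α • x) j := fun j => mul_pos hα0 (hx j)
    have hαx' : ∀ j, 0 < ((1/α) • x) j := fun j => mul_pos hαinv0 (hx j)
    have h1 : T y i ≤ T (α • x) i := Tmono y (α • x) hycone hαx hyub i
    have h2 : T (α • x) i < α * fx := by rw [hfx]; exact Tscale α hα x hx i
    have h3 : T ((1/α) • x) i ≤ T y i := Tmono ((1/α) • x) y hαx' hycone hylb i
    have h4 : (1/α) * fx < T ((1/α) • x) i := by rw [hfx]; exact Tscale_ge (1/α) hαinv0 hαinv1 x hx i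
    have hhalf : (α - 1) * fx = ε/2 := by nlinarith [hαε]
    have key : fx - 1/α * fx < ε := by
      have e1 : fx - 1/α * fx = ((α - 1) * fx)/α := by field_simp
      rw [e1, hhalf]
      have h5 : (ε/2)/α < ε/2 := div_lt_self (by positivity) hα
      linarith
    rw [Real.dist_eq, abs_lt]
    constructor
    · linarith
    · nlinarith [hhalf]
  -- ==== lower bound vector c, upper bound vector v ====
  have hne : (Finset.univ : Finset (Fin N)).Nonempty := ⟨i0, Finset.mem_univ i0⟩
  obtain ⟨c, hcdef⟩ : ∃ c : Fin N → ℝ, c = fun i => sInf ((fun x => T x i) '' PosCone N) :=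
    ⟨_, rfl⟩
  have hc_pos : ∀ i, 0 < c i := fun i => by rw [hcdef]; exact (hT i).2.2.2
  have hc_le : ∀ x : Fin N → ℝ, (∀ i, 0 < x i) → ∀ i, c i ≤ T x i := by
    intro x hx i
    rw [hcdef]
    apply csInf_le
    · refine ⟨0, ?_⟩
      rintro r ⟨z, hz, rfl⟩
      exact ((hT i).1 z hz).le
    · exact ⟨x, hx, rfl⟩
  have he_pos : ∀ i : Fin N, 0 < nrm (Pi.single i 1) := by
    intro i
    apply nrm_pos
    intro h
    have h2 := congrFun h i
    simp [Pi.single_eq_same] at h2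
  obtain ⟨u, hudef⟩ : ∃ u : Fin N → ℝ, u = fun i => 1 / nrm (Pi.single i 1) := ⟨_, rfl⟩
  have hu_pos : ∀ i, 0 < u i := fun i => by
    rw [hudef]; exact one_div_pos.mpr (he_pos i)
  have hxle_u : ∀ x : Fin N → ℝ, (∀ i, 0 < x i) → nrm x = 1 → ∀ j, x j ≤ u j := by
    intro x hx hx1 j
    have hsle : nrm (Pi.single j (x j)) ≤ nrm x := by
      apply hnmono
      · intro k
        rcases eq_or_ne k j with rfl | hk
        · rw [Pi.single_eq_same]; exact (hx k).le
        · rw [Pi.single_eq_of_ne hk]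
      · exact fun k => (hx k).le
      · intro k
        rcases eq_or_ne k j with rfl | hk
        · rw [Pi.single_eq_same]
        · rw [Pi.single_eq_of_ne hk]; exact (hx k).le
    rw [nrm_single j (x j), abs_of_nonneg (hx j).le, hx1] at hsle
    rw [hudef]
    rw [le_div_iff₀ (he_pos j)]
    exact hsle
  obtain ⟨v, hvdef⟩ : ∃ v : Fin N → ℝ, v = fun i => T u i := ⟨_, rfl⟩
  have hv_pos : ∀ i, 0 < v i := fun i => by rw [hvdef]; exact Tpos u hu_pos i
  have hcv : ∀ i, c i ≤ v i := fun i => by rw [hvdef]; exact hc_le u hu_pos i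
  have hTub : ∀ x : Fin N → ℝ, (∀ i, 0 < x i) → nrm x = 1 → ∀ i, T x i ≤ v i := by
    intro x hx hx1 i
    rw [hvdef]
    exact Tmono x u hx hu_pos (hxle_u x hx hx1) i
  have hnc : 0 < nrm c := by
    apply nrm_pos
    intro h
    exact absurd (congrFun h i0) (hc_pos i0).ne'
  have hncv : nrm c ≤ nrm v :=
    hnmono c v (fun i => (hc_pos i).le) (fun i => (hv_pos i).le) (fun i => hcv i)
  have hnv : 0 < nrm v := lt_of_lt_of_le hnc hncv
  have hnT_lb : ∀ x : Fin N → ℝ, (∀ i, 0 < x i) → nrm c ≤ nrm (T x) := fun x hx =>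
    hnmono c (T x) (fun i => (hc_pos i).le) (fun i => (Tpos x hx i).le) (fun i => hc_le x hx i)
  have hnrmTpos : ∀ x : Fin N → ℝ, (∀ i, 0 < x i) → 0 < nrm (T x) := fun x hx =>
    lt_of_lt_of_le hnc (hnT_lb x hx)
  have hnT_ub : ∀ x : Fin N → ℝ, (∀ i, 0 < x i) → nrm x = 1 → nrm (T x) ≤ nrm v := fun x hx hx1 =>
    hnmono (T x) v (fun i => (Tpos x hx i).le) (fun i => (hv_pos i).le) (fun i => hTub x hx hx1 i)
  -- ==== normalized map S ====
  obtain ⟨S, hSdef⟩ : ∃ S : (Fin N → ℝ) → (Fin N → ℝ),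
      S = fun x => (nrm (T x))⁻¹ • T x := ⟨_, rfl⟩
  have hSapp' : ∀ y, S y = (nrm (T y))⁻¹ • T y := fun y => by rw [hSdef]
  have hSapp : ∀ y i, S y i = T y i / nrm (T y) := by
    intro y i
    rw [hSapp' y]
    simp [div_eq_inv_mul]
  have hS_pos : ∀ x : Fin N → ℝ, (∀ i, 0 < x i) → ∀ i, 0 < S x i := by
    intro x hx i
    rw [hSapp]
    exact div_pos (Tpos x hx i) (hnrmTpos x hx)
  have hS_norm : ∀ x : Fin N → ℝ, (∀ i, 0 < x i) → nrm (S x) = 1 := by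
    intro x hx
    rw [hSapp' x, hnsmul, abs_of_nonneg (inv_nonneg.mpr (nrm_nonneg _)),
      inv_mul_cancel₀ (hnrmTpos x hx).ne']
  obtain ⟨lo, hlodef⟩ : ∃ lo : Fin N → ℝ, lo = fun i => c i / nrm v := ⟨_, rfl⟩
  obtain ⟨hi, hhidef⟩ : ∃ hi : Fin N → ℝ, hi = fun i => v i / nrm c := ⟨_, rfl⟩
  have hlo_pos : ∀ i, 0 < lo i := fun i => by rw [hlodef]; exact div_pos (hc_pos i) hnv
  have hS_lb : ∀ x : Fin N → ℝ, (∀ i, 0 < x i) → nrm x = 1 → ∀ i, lo i ≤ S x i := by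
    intro x hx hx1 i
    rw [hlodef, hSapp]
    exact div_le_div₀ (Tpos x hx i).le (hc_le x hx i) (hnrmTpos x hx) (hnT_ub x hx hx1)
  have hS_ub : ∀ x : Fin N → ℝ, (∀ i, 0 < x i) → nrm x = 1 → ∀ i, S x i ≤ hi i := by
    intro x hx hx1 i
    rw [hhidef, hSapp]
    exact div_le_div₀ (hv_pos i).le (hTub x hx hx1 i) hnc (hnT_lb x hx)
  -- ==== compact set K ====
  obtain ⟨K, hKdef⟩ : ∃ K : Set (Fin N → ℝ),
      K = Set.Icc lo hi ∩ {x | nrm x = 1} := ⟨_, rfl⟩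
  have hK_pos : ∀ x ∈ K, ∀ i, 0 < x i := by
    intro x hx i
    rw [hKdef] at hx
    exact lt_of_lt_of_le (hlo_pos i) (hx.1.1 i)
  have hK_norm : ∀ x ∈ K, nrm x = 1 := by
    intro x hx
    rw [hKdef] at hx
    exact hx.2
  have hSK : ∀ x : Fin N → ℝ, (∀ i, 0 < x i) → nrm x = 1 → S x ∈ K := by
    intro x hx hx1
    rw [hKdef]
    exact ⟨⟨fun i => hS_lb x hx hx1 i, fun i => hS_ub x hx hx1 i⟩, hS_norm x hx⟩
  have hKcomp : IsCompact K := by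
    rw [hKdef]
    exact IsCompact.of_isClosed_subset isCompact_Icc
      (isClosed_Icc.inter (isClosed_eq nrm_cont continuous_const)) Set.inter_subset_left
  have hKne : K.Nonempty := by
    have hw0 : ∀ i : Fin N, (0:ℝ) < (fun _ => (1:ℝ)) i := fun _ => one_pos
    have hwne : (fun _ => (1:ℝ)) ≠ (0 : Fin N → ℝ) := by
      intro h
      have h2 := congrFun h i0
      simp at h2
    have hnw : 0 < nrm (fun _ => (1:ℝ)) := nrm_pos _ hwne
    set w : Fin N → ℝ := (nrm (fun _ => (1:ℝ)))⁻¹ • (fun _ => (1:ℝ)) with hwdef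
    have hw_pos : ∀ i, 0 < w i := fun i => by
      rw [hwdef]
      exact mul_pos (inv_pos.mpr hnw) one_pos
    have hw_norm : nrm w = 1 := by
      rw [hwdef, hnsmul, abs_of_nonneg (inv_nonneg.mpr (nrm_nonneg _)),
        inv_mul_cancel₀ hnw.ne']
    exact ⟨S w, hSK w hw_pos hw_norm⟩
  -- ==== the Hilbert-type functional ====
  obtain ⟨M, hMdef⟩ : ∃ M : (Fin N → ℝ) → (Fin N → ℝ) → ℝ,
      M = fun X Y => Finset.univ.sup' hne (fun i => X i / Y i) := ⟨_, rfl⟩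
  have hM_ratio_le : ∀ X Y (i : Fin N), X i / Y i ≤ M X Y := by
    intro X Y i
    rw [hMdef]
    exact Finset.le_sup' (fun j => X j / Y j) (Finset.mem_univ i)
  have hM_pos : ∀ X Y : Fin N → ℝ, (∀ i, 0 < X i) → (∀ i, 0 < Y i) → 0 < M X Y := by
    intro X Y hX hY
    exact lt_of_lt_of_le (div_pos (hX i0) (hY i0)) (hM_ratio_le X Y i0)
  have hM_le_mul : ∀ X Y : Fin N → ℝ, (∀ i, 0 < Y i) → ∀ i, X i ≤ M X Y * Y i := by
    intro X Y hY i
    exact (div_le_iff₀ (hY i)).mp (hM_ratio_le X Y i)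
  have hM_le_of : ∀ (X Y : Fin N → ℝ) (r : ℝ), (∀ i, 0 < Y i) →
      (∀ i, X i ≤ r * Y i) → M X Y ≤ r := by
    intro X Y r hY h
    rw [hMdef]
    exact Finset.sup'_le _ _ fun i _ => (div_le_iff₀ (hY i)).mpr (h i)
  have hM_lt_of : ∀ (X Y : Fin N → ℝ) (r : ℝ), (∀ i, 0 < Y i) →
      (∀ i, X i < r * Y i) → M X Y < r := by
    intro X Y r hY h
    rw [hMdef]
    exact (Finset.sup'_lt_iff hne).mpr fun i _ => (div_lt_iff₀ (hY i)).mpr (h i)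
  have hM_scale : ∀ (a b : ℝ), 0 < a → 0 < b → ∀ X Y : Fin N → ℝ,
      M (a • X) (b • Y) = (a/b) * M X Y := by
    intro a b ha hb X Y
    rw [hMdef]
    simp only
    rw [← sup'_const_mul' _ hne (div_nonneg ha.le hb.le)]
    congr 1
    funext i
    simp only [Pi.smul_apply, smul_eq_mul]
    rw [mul_div_mul_comm]
  obtain ⟨D, hDdef⟩ : ∃ D : (Fin N → ℝ) → (Fin N → ℝ) → ℝ,
      D = fun X Y => M X Y * M Y X := ⟨_, rfl⟩
  have hD_scale : ∀ (a b : ℝ), 0 < a → 0 < b → ∀ X Y : Fin N → ℝ,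
      D (a • X) (b • Y) = D X Y := by
    intro a b ha hb X Y
    rw [hDdef]
    simp only
    rw [hM_scale a b ha hb, hM_scale b a hb ha]
    have h1 : a/b * (b/a) = 1 := by field_simp
    calc a / b * M X Y * (b / a * M Y X) = (a/b * (b/a)) * (M X Y * M Y X) := by ring
      _ = M X Y * M Y X := by rw [h1, one_mul]
  have hM_ge1 : ∀ X Y : Fin N → ℝ, (∀ i, 0 < X i) → (∀ i, 0 < Y i) →
      nrm X = 1 → nrm Y = 1 → 1 ≤ M X Y := by
    intro X Y hX hY hX1 hY1
    have hMp := hM_pos X Y hX hY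
    have h1 : nrm X ≤ nrm (M X Y • Y) := by
      apply hnmono X (M X Y • Y) (fun i => (hX i).le)
        (fun i => (mul_pos hMp (hY i)).le)
      intro i
      simpa using hM_le_mul X Y hY i
    rw [hX1, hnsmul, abs_of_pos hMp, hY1, mul_one] at h1
    exact h1
  -- ==== contraction ====
  have hhalf_le : ∀ X Y : Fin N → ℝ, (∀ i, 0 < X i) → (∀ i, 0 < Y i) → 1 ≤ M X Y →
      M (T X) (T Y) ≤ M X Y := by
    intro X Y hX hY h1
    apply hM_le_of _ _ _ (Tpos Y hY)
    intro i
    calc T X i ≤ T (M X Y • Y) i :=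
          Tmono X (M X Y • Y) hX (fun j => mul_pos (hM_pos X Y hX hY) (hY j))
            (fun j => by simpa using hM_le_mul X Y hY j) i
      _ ≤ M X Y * T Y i := Tscale_le _ h1 Y hY i
  have hhalf_lt : ∀ X Y : Fin N → ℝ, (∀ i, 0 < X i) → (∀ i, 0 < Y i) → 1 < M X Y →
      M (T X) (T Y) < M X Y := by
    intro X Y hX hY h1
    apply hM_lt_of _ _ _ (Tpos Y hY)
    intro i
    calc T X i ≤ T (M X Y • Y) i :=
          Tmono X (M X Y • Y) hX (fun j => mul_pos (hM_pos X Y hX hY) (hY j))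
            (fun j => by simpa using hM_le_mul X Y hY j) i
      _ < M X Y * T Y i := Tscale _ h1 Y hY i
  have hcontract : ∀ X Y : Fin N → ℝ, (∀ i, 0 < X i) → (∀ i, 0 < Y i) →
      nrm X = 1 → nrm Y = 1 → X ≠ Y → D (T X) (T Y) < D X Y := by
    intro X Y hX hY hX1 hY1 hXY
    have hβ := hM_ge1 X Y hX hY hX1 hY1
    have hα := hM_ge1 Y X hY hX hY1 hX1
    have hMT1 : 0 < M (T X) (T Y) := hM_pos _ _ (Tpos X hX) (Tpos Y hY)
    have hMT2 : 0 < M (T Y) (T X) := hM_pos _ _ (Tpos Y hY) (Tpos X hX)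
    have hcase : 1 < M X Y ∨ 1 < M Y X := by
      by_contra hcon
      push_neg at hcon
      apply hXY
      funext i
      have h1 : X i ≤ Y i := by
        have := hM_le_mul X Y hY i
        nlinarith [hcon.1, hY i]
      have h2 : Y i ≤ X i := by
        have := hM_le_mul Y X hX i
        nlinarith [hcon.2, hX i]
      exact le_antisymm h1 h2
    rw [hDdef]
    simp only
    rcases hcase with h | h
    · calc M (T X) (T Y) * M (T Y) (T X) < M X Y * M (T Y) (T X) :=
            mul_lt_mul_of_pos_right (hhalf_lt X Y hX hY h) hMT2
        _ ≤ M X Y * M Y X :=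
            mul_le_mul_of_nonneg_left (hhalf_le Y X hY hX hα) (hM_pos X Y hX hY).le
    · calc M (T X) (T Y) * M (T Y) (T X) ≤ M X Y * M (T Y) (T X) :=
            mul_le_mul_of_nonneg_right (hhalf_le X Y hX hY hβ) hMT2.le
        _ < M X Y * M Y X :=
            mul_lt_mul_of_pos_left (hhalf_lt Y X hY hX h) (hM_pos X Y hX hY)
  -- ==== continuity of the functional on K and minimization ====
  have hTK : ContinuousOn T K := fun x hx => (Tcont x (hK_pos x hx)).continuousWithinAt
  have hnrmTK : ContinuousOn (fun x => nrm (T x)) K := nrm_cont.comp_continuousOn hTK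
  have hSK_cont : ContinuousOn S K := by
    rw [hSdef]
    exact (hnrmTK.inv₀ fun x hx => (hnrmTpos x (hK_pos x hx)).ne').smul hTK
  have hScoord : ∀ i, ContinuousOn (fun x => S x i) K := fun i =>
    (continuous_apply i).comp_continuousOn hSK_cont
  have hg1 : ContinuousOn (fun x => M x (S x)) K := by
    rw [hMdef]
    simp only
    exact continuousOn_finset_sup' Finset.univ (fun i x => x i / S x i)
      (fun i _ => ((continuous_apply i).continuousOn).div (hScoord i)
        fun x hx => (hS_pos x (hK_pos x hx) i).ne') hne
  have hg2 : ContinuousOn (fun x => M (S x) x) K := by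
    rw [hMdef]
    simp only
    exact continuousOn_finset_sup' Finset.univ (fun i x => S x i / x i)
      (fun i _ => (hScoord i).div ((continuous_apply i).continuousOn)
        fun x hx => (hK_pos x hx i).ne') hne
  have hgcont : ContinuousOn (fun x => D x (S x)) K := by
    rw [hDdef]
    exact hg1.mul hg2
  obtain ⟨x₀, hx₀K, hx₀min⟩ := hKcomp.exists_isMinOn hKne hgcont
  have hx₀pos : ∀ i, 0 < x₀ i := hK_pos x₀ hx₀K
  have hx₀norm : nrm x₀ = 1 := hK_norm x₀ hx₀K
  have hnrmT₀ : 0 < nrm (T x₀) := hnrmTpos x₀ hx₀pos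
  have hfix : S x₀ = x₀ := by
    by_contra hne'
    have hSx₀K : S x₀ ∈ K := hSK x₀ hx₀pos hx₀norm
    have hSpos : ∀ i, 0 < S x₀ i := hK_pos _ hSx₀K
    have hSnorm : nrm (S x₀) = 1 := hK_norm _ hSx₀K
    have h2 : D (T x₀) (T (S x₀)) < D x₀ (S x₀) :=
      hcontract x₀ (S x₀) hx₀pos hSpos hx₀norm hSnorm fun h => hne' h.symm
    have h3 := hD_scale (nrm (T x₀))⁻¹ (nrm (T (S x₀)))⁻¹
      (inv_pos.mpr hnrmT₀) (inv_pos.mpr (hnrmTpos _ hSpos)) (T x₀) (T (S x₀))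
    rw [← hSapp' x₀, ← hSapp' (S x₀)] at h3
    have hge : D x₀ (S x₀) ≤ D (S x₀) (S (S x₀)) := hx₀min hSx₀K
    rw [h3] at hge
    linarith
  have hTx₀ : T x₀ = nrm (T x₀) • x₀ := by
    calc T x₀ = nrm (T x₀) • ((nrm (T x₀))⁻¹ • T x₀) := by
          rw [smul_smul, mul_inv_cancel₀ hnrmT₀.ne', one_smul]
      _ = nrm (T x₀) • S x₀ := by rw [hSapp' x₀]
      _ = nrm (T x₀) • x₀ := by rw [hfix]
  refine ⟨(nrm (T x₀), x₀), ⟨⟨hnrmT₀, hx₀pos⟩, hTx₀, hx₀norm⟩, ?_⟩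
  rintro ⟨μ, y⟩ ⟨⟨hμ, hy⟩, hTy, hny⟩
  have hyx : y = x₀ := by
    by_contra hne'
    have h1 : D (T y) (T x₀) < D y x₀ :=
      hcontract y x₀ hy hx₀pos hny hx₀norm hne'
    have h2 : D (T y) (T x₀) = D y x₀ := by
      rw [hTy, hTx₀]
      exact hD_scale μ (nrm (T x₀)) hμ hnrmT₀ y x₀
    linarith
  have hμγ : μ = nrm (T x₀) := by
    subst hyx
    have h := congrFun hTy i0
    have h' := congrFun hTx₀ i0
    simp only [Pi.smul_apply, smul_eq_mul] at h h'
    have h2 : μ * y i0 = nrm (T y) * y i0 := h.symm.trans h'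
    exact mul_right_cancel₀ (hx₀pos i0).ne' h2
  simp only [Prod.mk.injEq]
  exact ⟨hμγ, hyx⟩
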